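/- The compact space KA (the closure in the Cantor cube {0,1}^(ℝ²) of the set of characteristic functions of open unit disks with rational centers) is not an LΣ(≤ω)-space; that is, there do not exist a separable metrizable space M and a compact-valued upper semicontinuous onto set-valued map p from M to KA such that p(z) is metrizable for every z ∈ M. -/

import Mathlib

open TopologicalSpace

/-- A topological space `X` is an `LΣ(≤ω)`-space if there exist a separable metrizable
space `M` and a compact-valued upper semicontinuous onto set-valued map `p : M → Set X`
all of whose values are metrizable. -/
def IsLSigmaLeOmega (X : Type*) [TopologicalSpace X] : Prop :=
  ∃ (M : Type) (_ : TopologicalSpace M),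
    SeparableSpace M ∧ MetrizableSpace M ∧
    ∃ p : M → Set X,
      (⋃ z, p z) = Set.univ ∧
      (∀ z, IsCompact (p z)) ∧
      (∀ U : Set X, IsOpen U → IsOpen {z | p z ⊆ U}) ∧
      ∀ z, MetrizableSpace (p z)

/-- The open disk of radius `1` centered at `a` in the Euclidean plane. -/
def diskD (a : ℝ × ℝ) : Set (ℝ × ℝ) :=
  {x | (x.1 - a.1) ^ 2 + (x.2 - a.2) ^ 2 < 1}

/-- The characteristic function of a subset of the plane, with values in the
two-point discrete space `Bool`; this is a point of the Cantor cube `{0,1}^(ℝ²)`. -/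
noncomputable def chi (A : Set (ℝ × ℝ)) : (ℝ × ℝ) → Bool :=
  A.boolIndicator

/-- `Y` : the set of characteristic functions of open unit disks with rational centers,
viewed inside the Cantor cube `{0,1}^(ℝ²)` (with the product topology). -/
def YA : Set ((ℝ × ℝ) → Bool) :=
  {f | ∃ p : ℚ × ℚ, f = chi (diskD ((p.1 : ℝ), (p.2 : ℝ)))}

/-- `KA` : the closure of `Y` in the Cantor cube `{0,1}^(ℝ²)`. -/
def KA : Set ((ℝ × ℝ) → Bool) :=
  closure YA

namespace KAAux

noncomputable section

/-- squared euclidean norm on the plane -/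
def nsq (v : ℝ × ℝ) : ℝ := v.1 ^ 2 + v.2 ^ 2

/-- dot product on the plane -/
def dotp (u v : ℝ × ℝ) : ℝ := u.1 * v.1 + u.2 * v.2

/-- rotation by 90 degrees -/
def perp (w : ℝ × ℝ) : ℝ × ℝ := (-w.2, w.1)

/-- the open unit disk centered at `a` together with the open half boundary circle in
direction `w`, and optionally the endpoints `a ± perp w`. -/
def halfE (a w : ℝ × ℝ) (e₁ e₂ : Bool) : Set (ℝ × ℝ) :=
  {x | nsq (x - a) < 1 ∨ (nsq (x - a) = 1 ∧
    (0 < dotp (x - a) w ∨ (e₁ = true ∧ x = a + perp w) ∨ (e₂ = true ∧ x = a - perp w)))}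

/-- rational parametrization of the unit circle -/
def cmap (t : ℝ) : ℝ × ℝ := ((1 - t ^ 2) / (1 + t ^ 2), 2 * t / (1 + t ^ 2))

/-- `S` accumulates at `a` from direction `w`. -/
def DirAt (S : Set (ℝ × ℝ)) (a w : ℝ × ℝ) : Prop :=
  ∀ ε > 0, ∃ b ∈ S, b ≠ a ∧ nsq (b - a) < ε ^ 2 ∧
    nsq ((Real.sqrt (nsq (b - a)))⁻¹ • (b - a) - w) < ε ^ 2

lemma nsq_nonneg (v : ℝ × ℝ) : 0 ≤ nsq v := by
  simp only [nsq]; positivity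

lemma nsq_eq_zero {v : ℝ × ℝ} : nsq v = 0 ↔ v = 0 := by
  simp only [nsq]
  constructor
  · intro h
    have h1 : v.1 = 0 := by nlinarith [sq_nonneg v.1, sq_nonneg v.2]
    have h2 : v.2 = 0 := by nlinarith [sq_nonneg v.1, sq_nonneg v.2]
    exact Prod.ext h1 h2
  · rintro rfl; simp

lemma nsq_expand (u v : ℝ × ℝ) : nsq (u - v) = nsq u - 2 * dotp u v + nsq v := by
  simp only [nsq, dotp, Prod.fst_sub, Prod.snd_sub]; ring

lemma dotp_sq_le (u v : ℝ × ℝ) : dotp u v ^ 2 ≤ nsq u * nsq v := by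
  simp only [nsq, dotp]; nlinarith [sq_nonneg (u.1 * v.2 - u.2 * v.1)]

lemma nsq_smul (c : ℝ) (v : ℝ × ℝ) : nsq (c • v) = c ^ 2 * nsq v := by
  simp only [nsq, Prod.smul_fst, Prod.smul_snd, smul_eq_mul]; ring

lemma nsq_add_le (u v : ℝ × ℝ) : nsq (u + v) ≤ 2 * nsq u + 2 * nsq v := by
  simp only [nsq, Prod.fst_add, Prod.snd_add]
  nlinarith [sq_nonneg (u.1 - v.1), sq_nonneg (u.2 - v.2)]

lemma nsq_perp (w : ℝ × ℝ) : nsq (perp w) = nsq w := by simp [nsq, perp]; ring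

lemma dotp_perp_self (w : ℝ × ℝ) : dotp (perp w) w = 0 := by simp [dotp, perp]; ring

lemma dotp_perp_antisymm (u w : ℝ × ℝ) : dotp (perp u) w = - dotp (perp w) u := by
  simp [dotp, perp]; ring

lemma unit_parallel {u w : ℝ × ℝ} (hu : nsq u = 1) (hw : nsq w = 1)
    (h : dotp (perp w) u = 0) : u = w ∨ u = -w := by
  simp only [nsq, dotp, perp] at *
  have h1 : u.1 = (w.1 * u.1 + w.2 * u.2) * w.1 := by
    linear_combination (-u.1) * hw + (-w.2) * h
  have h2 : u.2 = (w.1 * u.1 + w.2 * u.2) * w.2 := by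
    linear_combination (-u.2) * hw + w.1 * h
  set k := w.1 * u.1 + w.2 * u.2 with hkdef
  have hksq : k ^ 2 = 1 := by
    have h3 : k ^ 2 * w.1 ^ 2 + k ^ 2 * w.2 ^ 2 = 1 := by
      rw [← hu, h1, h2]; ring
    nlinarith [hw]
  have hk : (k - 1) * (k + 1) = 0 := by linear_combination hksq
  rcases mul_eq_zero.mp hk with h' | h'
  · left
    have hk1 : k = 1 := by linarith
    rw [hk1] at h1 h2
    exact Prod.ext (by linarith) (by linarith)
  · right
    have hk1 : k = -1 := by linarith
    rw [hk1] at h1 h2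
    exact Prod.ext (by simpa using h1) (by simpa using h2)

lemma perp_ne_zero {w : ℝ × ℝ} (hw : nsq w = 1) : perp w ≠ 0 := by
  intro h
  have : nsq (perp w) = 0 := by rw [h]; simp [nsq]
  rw [nsq_perp, hw] at this; norm_num at this

lemma perp_eq_iff {u w : ℝ × ℝ} : perp u = perp w ↔ u = w := by
  constructor
  · intro h
    have h1 := congrArg Prod.fst h
    have h2 := congrArg Prod.snd h
    simp only [perp, neg_inj] at h1 h2
    exact Prod.ext h2 h1
  · rintro rfl; rfl

lemma perp_eq_neg_iff {u w : ℝ × ℝ} : perp u = -perp w ↔ u = -w := by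
  constructor
  · intro h
    have h1 := congrArg Prod.fst h
    have h2 := congrArg Prod.snd h
    simp only [perp, Prod.fst_neg, Prod.snd_neg, neg_neg, neg_inj] at h1 h2
    refine Prod.ext ?_ ?_
    · simpa using h2
    · have : u.2 = -w.2 := by linarith [h1]
      simpa using this
  · rintro rfl
    simp only [perp, Prod.fst_neg, Prod.snd_neg]
    exact Prod.ext (by simp) (by simp)

lemma nsq_cmap (t : ℝ) : nsq (cmap t) = 1 := by
  have h : (1 : ℝ) + t ^ 2 ≠ 0 := by positivity
  simp only [nsq, cmap]
  field_simp
  ring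

lemma cmap_injective : Function.Injective cmap := by
  intro s t h
  have h1 := congrArg Prod.fst h
  have h2 := congrArg Prod.snd h
  simp only [cmap] at h1 h2
  have hs : (1 : ℝ) + s ^ 2 ≠ 0 := by positivity
  have ht : (1 : ℝ) + t ^ 2 ≠ 0 := by positivity
  have e1 : (1 - s ^ 2) * (1 + t ^ 2) = (1 - t ^ 2) * (1 + s ^ 2) := by
    field_simp at h1; linarith [h1]
  have e2 : 2 * s * (1 + t ^ 2) = 2 * t * (1 + s ^ 2) := by
    field_simp at h2; linarith [h2]
  have hsq : s ^ 2 = t ^ 2 := by nlinarith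
  nlinarith [sq_nonneg (s - t), sq_nonneg (s + t)]

lemma nsq_le_two_dist_sq (u v : ℝ × ℝ) : nsq (u - v) ≤ 2 * dist u v ^ 2 := by
  have h1 : dist u.1 v.1 ≤ dist u v := by rw [Prod.dist_eq]; exact le_max_left _ _
  have h2 : dist u.2 v.2 ≤ dist u v := by rw [Prod.dist_eq]; exact le_max_right _ _
  have d1 : |u.1 - v.1| ≤ dist u v := by rwa [Real.dist_eq] at h1
  have d2 : |u.2 - v.2| ≤ dist u v := by rwa [Real.dist_eq] at h2
  have := abs_nonneg (u.1 - v.1)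
  simp only [nsq, Prod.fst_sub, Prod.snd_sub]
  nlinarith [sq_abs (u.1 - v.1), sq_abs (u.2 - v.2), abs_nonneg (u.2 - v.2), dist_nonneg (x := u) (y := v)]

lemma nsq_neg (v : ℝ × ℝ) : nsq (-v) = nsq v := by simp [nsq]

lemma dotp_comm (u v : ℝ × ℝ) : dotp u v = dotp v u := by simp only [dotp]; ring

lemma dotp_neg_left (u v : ℝ × ℝ) : dotp (-u) v = -dotp u v := by
  simp only [dotp, Prod.fst_neg, Prod.snd_neg]; ring

lemma perp_perp (w : ℝ × ℝ) : perp (perp w) = -w := by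
  simp only [perp]; exact Prod.ext (by simp) (by simp)

lemma unit_orth {u w : ℝ × ℝ} (hu : nsq u = 1) (hw : nsq w = 1)
    (h : dotp u w = 0) : u = perp w ∨ u = -perp w := by
  have h2 : dotp (perp (perp w)) u = 0 := by
    rw [perp_perp, dotp_neg_left, dotp_comm, h, neg_zero]
  have h3 : nsq (perp w) = 1 := by rw [nsq_perp, hw]
  exact unit_parallel hu h3 h2

lemma chi_eq_true {A : Set (ℝ × ℝ)} {x : ℝ × ℝ} : chi A x = true ↔ x ∈ A :=
  (A.mem_iff_boolIndicator x).symm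

lemma chi_eq_false {A : Set (ℝ × ℝ)} {x : ℝ × ℝ} : chi A x = false ↔ x ∉ A :=
  (A.notMem_iff_boolIndicator x).symm

lemma chi_eq_of_iff {A B : Set (ℝ × ℝ)} {x y : ℝ × ℝ} (h : x ∈ A ↔ y ∈ B) :
    chi A x = chi B y := by
  by_cases hx : x ∈ A
  · rw [chi_eq_true.mpr hx, (chi_eq_true.mpr (h.mp hx)).symm]
  · rw [chi_eq_false.mpr hx, (chi_eq_false.mpr (fun hy => hx (h.mpr hy))).symm]

lemma chi_eq_decide {A : Set (ℝ × ℝ)} {x : ℝ × ℝ} {P : Prop} [Decidable P]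
    (h : x ∈ A ↔ P) : chi A x = decide P := by
  by_cases hp : P
  · rw [chi_eq_true.mpr (h.mpr hp)]; simp [hp]
  · rw [chi_eq_false.mpr (fun hx => hp (h.mp hx))]; simp [hp]

lemma chi_eq_bool {A : Set (ℝ × ℝ)} {x : ℝ × ℝ} {b : Bool}
    (h : x ∈ A ↔ b = true) : chi A x = b := by
  cases b
  · exact chi_eq_false.mpr (by simpa using h)
  · exact chi_eq_true.mpr (h.mpr rfl)

lemma key_add (a p : ℝ × ℝ) : a + p - a = p := by abel

lemma key_sub (a p : ℝ × ℝ) : a - p - a = -p := by abel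

lemma pos_ne_neg {a w : ℝ × ℝ} (hw : nsq w = 1) : a + perp w ≠ a - perp w := by
  intro h
  rw [sub_eq_add_neg] at h
  have h2 : perp w = -perp w := add_left_cancel h
  have h3 : perp w = 0 := by
    have : perp w + perp w = 0 := by nth_rewrite 1 [h2]; abel
    have h4 := congrArg Prod.fst this
    have h5 := congrArg Prod.snd this
    simp only [Prod.fst_add, Prod.snd_add, Prod.fst_zero, Prod.snd_zero] at h4 h5
    exact Prod.ext (by simp only [Prod.fst_zero]; linarith) (by simp only [Prod.snd_zero]; linarith)
  exact perp_ne_zero hw h3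

lemma chi_halfE_pos_endpoint {a w : ℝ × ℝ} (hw : nsq w = 1) (e₁ e₂ : Bool) :
    chi (halfE a w e₁ e₂) (a + perp w) = e₁ := by
  apply chi_eq_bool
  unfold halfE
  rw [Set.mem_setOf_eq, key_add, nsq_perp, hw, dotp_perp_self]
  constructor
  · rintro (h | ⟨-, h | ⟨h, -⟩ | ⟨-, heq⟩⟩)
    · exact absurd h (lt_irrefl 1)
    · exact absurd h (lt_irrefl 0)
    · exact h
    · exact absurd heq (pos_ne_neg hw)
  · intro h; exact Or.inr ⟨rfl, Or.inr (Or.inl ⟨h, rfl⟩)⟩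

lemma chi_halfE_neg_endpoint {a w : ℝ × ℝ} (hw : nsq w = 1) (e₁ e₂ : Bool) :
    chi (halfE a w e₁ e₂) (a - perp w) = e₂ := by
  apply chi_eq_bool
  unfold halfE
  rw [Set.mem_setOf_eq, key_sub, nsq_neg, nsq_perp, hw, dotp_neg_left, dotp_perp_self]
  constructor
  · rintro (h | ⟨-, h | ⟨-, heq⟩ | ⟨h, -⟩⟩)
    · exact absurd h (lt_irrefl 1)
    · rw [neg_zero] at h; exact absurd h (lt_irrefl 0)
    · exact absurd heq.symm (pos_ne_neg hw)
    · exact h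
  · intro h; exact Or.inr ⟨rfl, Or.inr (Or.inr ⟨h, rfl⟩)⟩

lemma chi_halfE_other_pos {a u w : ℝ × ℝ} (hu : nsq u = 1) (hw : nsq w = 1)
    (h1 : u ≠ w) (h2 : u ≠ -w) (e₁ e₂ : Bool) :
    chi (halfE a u e₁ e₂) (a + perp w) = decide (0 < dotp (perp w) u) := by
  apply chi_eq_decide
  unfold halfE
  rw [Set.mem_setOf_eq, key_add, nsq_perp, hw]
  constructor
  · rintro (h | ⟨-, h | ⟨-, heq⟩ | ⟨-, heq⟩⟩)
    · exact absurd h (lt_irrefl 1)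
    · exact h
    · exfalso
      have : perp w = perp u := add_left_cancel heq
      exact h1 (perp_eq_iff.mp this.symm)
    · exfalso
      rw [sub_eq_add_neg] at heq
      have h3 : perp w = -perp u := add_left_cancel heq
      have h4 : w = -u := perp_eq_neg_iff.mp h3
      exact h2 (by rw [h4, neg_neg])
  · intro h; exact Or.inr ⟨rfl, Or.inl h⟩

lemma chi_halfE_other_neg {a u w : ℝ × ℝ} (hu : nsq u = 1) (hw : nsq w = 1)
    (h1 : u ≠ w) (h2 : u ≠ -w) (e₁ e₂ : Bool) :
    chi (halfE a u e₁ e₂) (a - perp w) = decide (dotp (perp w) u < 0) := by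
  apply chi_eq_decide
  unfold halfE
  rw [Set.mem_setOf_eq, key_sub, nsq_neg, nsq_perp, hw, dotp_neg_left]
  constructor
  · rintro (h | ⟨-, h | ⟨-, heq⟩ | ⟨-, heq⟩⟩)
    · exact absurd h (lt_irrefl 1)
    · linarith
    · exfalso
      rw [sub_eq_add_neg] at heq
      have h3 : -perp w = perp u := add_left_cancel heq
      have h4 : perp u = -perp w := h3.symm
      exact h2 (perp_eq_neg_iff.mp h4)
    · exfalso
      rw [sub_eq_add_neg, sub_eq_add_neg] at heq
      have h3 : -perp w = -perp u := add_left_cancel heq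
      have h4 : perp w = perp u := by
        have := congrArg Neg.neg h3; simpa using this
      exact h1 (perp_eq_iff.mp h4.symm)
  · intro h; exact Or.inr ⟨rfl, Or.inl (by linarith)⟩


lemma mem_diskD {c x : ℝ × ℝ} : x ∈ diskD c ↔ nsq (x - c) < 1 := by
  simp [diskD, nsq]

lemma mem_halfE_ff {a w x : ℝ × ℝ} :
    x ∈ halfE a w false false ↔ (nsq (x - a) < 1 ∨ (nsq (x - a) = 1 ∧ 0 < dotp (x - a) w)) := by
  unfold halfE
  rw [Set.mem_setOf_eq]
  simp

lemma mem_KA_of_finset {f : (ℝ × ℝ) → Bool}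
    (h : ∀ T : Finset (ℝ × ℝ), ∃ q : ℚ × ℚ,
      ∀ x ∈ T, chi (diskD ((q.1 : ℝ), (q.2 : ℝ))) x = f x) : f ∈ KA := by
  rw [KA, mem_closure_iff]
  intro O hO hfO
  obtain ⟨I, u, hu, hsub⟩ := isOpen_pi_iff.mp hO f hfO
  obtain ⟨q, hq⟩ := h I
  refine ⟨chi (diskD ((q.1 : ℝ), (q.2 : ℝ))), hsub ?_, ⟨q, rfl⟩⟩
  intro x hx
  rw [hq x hx]
  exact (hu x hx).2

lemma finset_ub (T : Finset (ℝ × ℝ)) (g : (ℝ × ℝ) → ℝ) :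
    ∃ R, 1 ≤ R ∧ ∀ x ∈ T, g x ≤ R := by
  classical
  induction T using Finset.induction with
  | empty => exact ⟨1, le_refl 1, by simp⟩
  | @insert b s hb ih =>
    obtain ⟨R, hR1, hR⟩ := ih
    refine ⟨max R (g b), le_trans hR1 (le_max_left _ _), ?_⟩
    intro x hx
    rcases Finset.mem_insert.mp hx with rfl | hx
    · exact le_max_right _ _
    · exact le_trans (hR x hx) (le_max_left _ _)

lemma finset_pos_lb (T : Finset (ℝ × ℝ)) (β : (ℝ × ℝ) → ℝ) (h : ∀ x ∈ T, 0 < β x) :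
    ∃ ε, 0 < ε ∧ ∀ x ∈ T, ε ≤ β x := by
  classical
  induction T using Finset.induction with
  | empty => exact ⟨1, one_pos, by simp⟩
  | @insert b s hb ih =>
    obtain ⟨ε, hε, hεle⟩ := ih fun x hx => h x (Finset.mem_insert_of_mem hx)
    refine ⟨min ε (β b), lt_min hε (h b (Finset.mem_insert_self b s)), ?_⟩
    intro x hx
    rcases Finset.mem_insert.mp hx with rfl | hx
    · exact min_le_right _ _
    · exact le_trans (min_le_left _ _) (hεle x hx)

/-! arithmetic cores -/

section cores
variable {R ε η X1 X2 δ1 δ2 : ℝ} (hR : 1 ≤ R) (hX1 : |X1| ≤ R) (hX2 : |X2| ≤ R)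
  (hε0 : 0 < ε) (hε1 : ε ≤ 1) (hη : η = ε ^ 2 / (8 * R + 8))
  (hδ1 : |δ1 - ε| ≤ η) (hδ2 : |δ2| ≤ η)

include hR hX1 hX2 hε0 hε1 hη hδ1 hδ2

lemma core_in (hcase : ε < (1 - (X1 ^ 2 + X2 ^ 2)) / (8 * R)) :
    (X1 - δ1) ^ 2 + (X2 - δ2) ^ 2 < 1 := by
  obtain ⟨hX1a, hX1b⟩ := abs_le.mp hX1
  obtain ⟨hX2a, hX2b⟩ := abs_le.mp hX2
  obtain ⟨hδ1a, hδ1b⟩ := abs_le.mp hδ1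
  obtain ⟨hδ2a, hδ2b⟩ := abs_le.mp hδ2
  have hηb : η ≤ ε / 16 := by
    rw [hη]
    rw [div_le_div_iff₀ (by linarith) (by norm_num)]
    nlinarith
  have hRpos : (0:ℝ) < 8 * R := by linarith
  have hc : 8 * R * ε < 1 - (X1 ^ 2 + X2 ^ 2) := by
    have := (lt_div_iff₀ hRpos).mp hcase
    linarith
  nlinarith [sq_nonneg (X1 - δ1), sq_nonneg (X2 - δ2), sq_nonneg δ1, sq_nonneg δ2,
    mul_pos hε0 hε0]

lemma core_out (hcase : ε < ((X1 ^ 2 + X2 ^ 2) - 1) / (8 * R)) :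
    ¬ ((X1 - δ1) ^ 2 + (X2 - δ2) ^ 2 < 1) := by
  obtain ⟨hX1a, hX1b⟩ := abs_le.mp hX1
  obtain ⟨hX2a, hX2b⟩ := abs_le.mp hX2
  obtain ⟨hδ1a, hδ1b⟩ := abs_le.mp hδ1
  obtain ⟨hδ2a, hδ2b⟩ := abs_le.mp hδ2
  have hηb : η ≤ ε / 16 := by
    rw [hη, div_le_div_iff₀ (by linarith) (by norm_num)]
    nlinarith
  have hRpos : (0:ℝ) < 8 * R := by linarith
  have hc : 8 * R * ε < (X1 ^ 2 + X2 ^ 2) - 1 := by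
    have := (lt_div_iff₀ hRpos).mp hcase
    linarith
  push_neg
  nlinarith [sq_nonneg δ1, sq_nonneg δ2]

lemma core_bpos (hr : X1 ^ 2 + X2 ^ 2 = 1) (hs : 0 < X1) (hcase : ε < X1) :
    (X1 - δ1) ^ 2 + (X2 - δ2) ^ 2 < 1 := by
  obtain ⟨hδ1a, hδ1b⟩ := abs_le.mp hδ1
  obtain ⟨hδ2a, hδ2b⟩ := abs_le.mp hδ2
  have hη0 : 0 ≤ η := by rw [hη]; positivity
  have hη16 : η ≤ ε ^ 2 / 16 := by
    rw [hη]
    apply div_le_div_of_nonneg_left (by positivity) (by norm_num) (by linarith)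
  have hX1le1 : X1 ≤ 1 := by nlinarith [sq_nonneg X2]
  have hX2le1 : |X2| ≤ 1 := by
    rw [abs_le]; constructor <;> nlinarith [sq_nonneg X1]
  have h2 : -η ≤ X2 * δ2 := by
    have habs : |X2 * δ2| ≤ η := by
      rw [abs_mul]
      calc |X2| * |δ2| ≤ 1 * η := by
            apply mul_le_mul hX2le1 hδ2 (abs_nonneg _) zero_le_one
        _ = η := one_mul η
    linarith [neg_abs_le (X2 * δ2)]
  have h1 : 2 * X1 * ε - 2 * η ≤ 2 * (X1 * δ1) := by nlinarith
  have hεsq : ε ^ 2 ≤ ε := by nlinarith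
  nlinarith [mul_le_mul_of_nonneg_right hcase.le hε0.le, sq_nonneg ε]

lemma core_bneg (hr : X1 ^ 2 + X2 ^ 2 = 1) (hs : X1 ≤ 0) :
    ¬ ((X1 - δ1) ^ 2 + (X2 - δ2) ^ 2 < 1) := by
  obtain ⟨hδ1a, hδ1b⟩ := abs_le.mp hδ1
  obtain ⟨hδ2a, hδ2b⟩ := abs_le.mp hδ2
  have hη0 : 0 ≤ η := by rw [hη]; positivity
  have hη16 : η ≤ ε ^ 2 / 16 := by
    rw [hη]
    apply div_le_div_of_nonneg_left (by positivity) (by norm_num) (by linarith)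
  have hX2le1 : |X2| ≤ 1 := by
    rw [abs_le]; constructor <;> nlinarith [sq_nonneg X1]
  have h2 : X2 * δ2 ≤ η := by
    have habs : |X2 * δ2| ≤ η := by
      rw [abs_mul]
      calc |X2| * |δ2| ≤ 1 * η := by
            apply mul_le_mul hX2le1 hδ2 (abs_nonneg _) zero_le_one
        _ = η := one_mul η
    linarith [le_abs_self (X2 * δ2)]
  have hδ1pos : 0 < δ1 := by nlinarith
  have h1 : X1 * δ1 ≤ 0 := mul_nonpos_of_nonpos_of_nonneg hs hδ1pos.le
  have hεsq : ε ^ 2 ≤ ε := by nlinarith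
  push_neg
  nlinarith [sq_nonneg δ2]

end cores

lemma half_mem_KA (a : ℝ × ℝ) : chi (halfE a (1, 0) false false) ∈ KA := by
  apply mem_KA_of_finset
  intro T
  obtain ⟨R, hR1, hRb⟩ := finset_ub T (fun x => |x.1 - a.1| ⊔ |x.2 - a.2|)
  classical
  set β : (ℝ × ℝ) → ℝ := fun x =>
    if nsq (x - a) < 1 then (1 - nsq (x - a)) / (8 * R)
    else if 1 < nsq (x - a) then (nsq (x - a) - 1) / (8 * R)
    else if 0 < x.1 - a.1 then x.1 - a.1 else 1 with hβ
  have hβpos : ∀ x ∈ T, 0 < β x := by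
    intro x _
    rw [hβ]
    simp only
    split_ifs with h1 h2 h3
    · apply div_pos (by linarith) (by linarith)
    · apply div_pos (by linarith) (by linarith)
    · exact h3
    · exact one_pos
  obtain ⟨ε₀, hε₀pos, hε₀le⟩ := finset_pos_lb T β hβpos
  obtain ⟨ε, hεa, hεb⟩ := exists_rat_btwn (show (0:ℝ) < min ε₀ 1 from lt_min hε₀pos one_pos)
  set εr : ℝ := (ε : ℝ) with hεr
  have hεr0 : 0 < εr := hεa
  have hεr1 : εr ≤ 1 := le_of_lt (lt_of_lt_of_le hεb (min_le_right _ _))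
  have hεrβ : ∀ x ∈ T, εr < β x :=
    fun x hx => lt_of_lt_of_le (lt_of_lt_of_le hεb (min_le_left _ _)) (hε₀le x hx)
  set η : ℝ := εr ^ 2 / (8 * R + 8) with hηdef
  have hη0 : 0 < η := by rw [hηdef]; positivity
  obtain ⟨q1, hq1a, hq1b⟩ := exists_rat_btwn (show a.1 + εr - η < a.1 + εr by linarith)
  obtain ⟨q2, hq2a, hq2b⟩ := exists_rat_btwn (show a.2 - η < a.2 by linarith)
  refine ⟨(q1, q2), ?_⟩
  intro x hxT
  apply chi_eq_of_iff
  rw [mem_diskD, mem_halfE_ff]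
  set X1 : ℝ := x.1 - a.1 with hX1def
  set X2 : ℝ := x.2 - a.2 with hX2def
  set δ1 : ℝ := (q1 : ℝ) - a.1 with hδ1def
  set δ2 : ℝ := (q2 : ℝ) - a.2 with hδ2def
  have hsub : nsq (x - ((q1 : ℝ), (q2 : ℝ))) = (X1 - δ1) ^ 2 + (X2 - δ2) ^ 2 := by
    simp only [nsq, Prod.fst_sub, Prod.snd_sub, hX1def, hδ1def, hX2def, hδ2def]
    ring
  have hXa : nsq (x - a) = X1 ^ 2 + X2 ^ 2 := by
    simp only [nsq, Prod.fst_sub, Prod.snd_sub, hX1def, hX2def]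
  have hdot : dotp (x - a) (1, 0) = X1 := by
    simp only [dotp, Prod.fst_sub, Prod.snd_sub, hX1def]
    ring
  have hX1R : |X1| ≤ R := le_trans (le_max_left _ _) (hRb x hxT)
  have hX2R : |X2| ≤ R := le_trans (le_max_right _ _) (hRb x hxT)
  have hδ1 : |δ1 - εr| ≤ η := by
    rw [abs_le]; constructor <;> [linarith; linarith]
  have hδ2 : |δ2| ≤ η := by
    rw [abs_le]; constructor <;> [linarith; linarith]
  have hβx := hεrβ x hxT
  rw [hβ] at hβx
  simp only [hXa] at hβx ⊢
  rcases lt_trichotomy (X1 ^ 2 + X2 ^ 2) 1 with hlt | heq | hgt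
  · rw [if_pos hlt] at hβx
    apply iff_of_true
    · rw [hsub]
      exact core_in hR1 hX1R hX2R hεr0 hεr1 rfl hδ1 hδ2 (by linarith [hβx])
    · exact Or.inl hlt
  · rw [if_neg (by rw [heq]; exact lt_irrefl 1), if_neg (by rw [heq]; exact lt_irrefl 1)] at hβx
    by_cases hs : 0 < X1
    · rw [if_pos hs] at hβx
      apply iff_of_true
      · rw [hsub]
        exact core_bpos hR1 hX1R hX2R hεr0 hεr1 rfl hδ1 hδ2 heq hs hβx
      · exact Or.inr ⟨heq, by rw [hdot]; exact hs⟩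
    · push_neg at hs
      apply iff_of_false
      · rw [hsub]
        exact core_bneg hR1 hX1R hX2R hεr0 hεr1 rfl hδ1 hδ2 heq hs
      · rintro (h | ⟨-, h⟩)
        · exact absurd h (by rw [heq]; exact lt_irrefl 1)
        · rw [hdot] at h; exact absurd h (not_lt.mpr hs)
  · rw [if_neg (by linarith), if_pos hgt] at hβx
    apply iff_of_false
    · rw [hsub]
      exact core_out hR1 hX1R hX2R hεr0 hεr1 rfl hδ1 hδ2 (by linarith [hβx])
    · rintro (h | ⟨h, -⟩)
      · linarith
      · rw [h] at hgt; exact absurd hgt (lt_irrefl 1)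




lemma nsq_expand_add (u v : ℝ × ℝ) : nsq (u + v) = nsq u + 2 * dotp u v + nsq v := by
  simp only [nsq, dotp, Prod.fst_add, Prod.snd_add]; ring

lemma dotp_smul_left (c : ℝ) (u v : ℝ × ℝ) : dotp (c • u) v = c * dotp u v := by
  simp only [dotp, Prod.smul_fst, Prod.smul_snd, smul_eq_mul]; ring

lemma continuous_cmap : Continuous cmap := by
  have h : ∀ t : ℝ, (1 : ℝ) + t ^ 2 ≠ 0 := fun t => by positivity
  apply Continuous.prodMk
  · exact Continuous.div (by continuity) (by continuity) h
  · exact Continuous.div (by continuity) (by continuity) h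

lemma cmap_rat_approx (t : ℝ) {η : ℝ} (hη : 0 < η) :
    ∃ q : ℚ, nsq (cmap (q : ℝ) - cmap t) < η := by
  have hc : ContinuousAt cmap t := continuous_cmap.continuousAt
  have hη2 : 0 < Real.sqrt (η / 2) := Real.sqrt_pos.mpr (by linarith)
  obtain ⟨δ, hδ0, hδ⟩ := Metric.continuousAt_iff.mp hc (Real.sqrt (η / 2)) hη2
  obtain ⟨q, hq1, hq2⟩ := exists_rat_btwn (show t - δ/2 < t by linarith)
  have hdist : dist (q : ℝ) t < δ := by
    rw [Real.dist_eq, abs_lt]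
    constructor <;> linarith
  have := hδ hdist
  refine ⟨q, lt_of_le_of_lt (nsq_le_two_dist_sq _ _) ?_⟩
  have h2 : dist (cmap (q:ℝ)) (cmap t) ^ 2 < Real.sqrt (η/2) ^ 2 := by
    apply sq_lt_sq' _ this
    linarith [dist_nonneg (x := cmap (q:ℝ)) (y := cmap t)]
  rw [Real.sq_sqrt (by linarith : (0:ℝ) ≤ η/2)] at h2
  linarith

set_option maxHeartbeats 1000000 in
lemma final_arith {κ ρ τ t2 E d : ℝ} (hκ : 0 < κ) (hκ1 : κ ≤ 1) (hρ : 0 < ρ)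
    (hρκ : ρ ≤ κ / 1000) (hτ : τ = ρ * κ / 1000)
    (hE0 : 0 ≤ E) (hE8 : E ≤ 8 * τ ^ 2) (hd : |d| ≤ 3 * τ)
    (ht2 : t2 = ρ ^ 2 + 2 * ρ * d + E) :
    0 < t2 ∧ t2 < κ ^ 2 ∧
      2 * ((Real.sqrt t2)⁻¹ * ρ - 1) ^ 2 + 2 * ((Real.sqrt t2)⁻¹) ^ 2 * E < κ ^ 2 := by
  obtain ⟨hd1, hd2⟩ := abs_le.mp hd
  have hτ0 : 0 < τ := by rw [hτ]; positivity
  have hτρ : τ ≤ ρ / 1000 := by rw [hτ]; nlinarith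
  have hρ2pos : (0:ℝ) < ρ ^ 2 := by positivity
  have hpd1 : ρ * (-(3 * τ)) ≤ ρ * d := mul_le_mul_of_nonneg_left hd1 hρ.le
  have hpd2 : ρ * d ≤ ρ * (3 * τ) := mul_le_mul_of_nonneg_left hd2 hρ.le
  have hE' : E ≤ ρ * τ := by
    refine le_trans hE8 ?_
    nlinarith [mul_le_mul_of_nonneg_left hτρ (by positivity : (0:ℝ) ≤ 8 * τ)]
  have hρτρ2 : ρ * τ ≤ ρ ^ 2 / 1000 := by nlinarith
  have hdiff1 : -(7 * (ρ * τ)) ≤ t2 - ρ ^ 2 := by nlinarith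
  have hdiff2 : t2 - ρ ^ 2 ≤ 7 * (ρ * τ) := by nlinarith
  have hρτ0 : 0 ≤ ρ * τ := by positivity
  have ht2pos : 0 < t2 := by nlinarith
  have ht2lo : ρ ^ 2 / 2 ≤ t2 := by nlinarith
  have ht2hi : t2 ≤ 2 * ρ ^ 2 := by nlinarith
  have hρκ2 : ρ ^ 2 ≤ κ ^ 2 / 1000000 := by nlinarith
  refine ⟨ht2pos, by nlinarith, ?_⟩
  set t := Real.sqrt t2 with htdef
  have ht0 : 0 < t := Real.sqrt_pos.mpr ht2pos
  have htsq : t ^ 2 = t2 := Real.sq_sqrt ht2pos.le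
  have h1 : (t⁻¹ * ρ - 1) ^ 2 = (ρ - t) ^ 2 / t2 := by
    rw [← htsq]; field_simp; try ring
  have h2 : 2 * (t⁻¹) ^ 2 * E = 2 * (E / t2) := by
    rw [← htsq]; field_simp
  rw [h1, h2]
  have hsq : (ρ - t) ^ 2 * ρ ^ 2 ≤ (ρ ^ 2 - t2) ^ 2 := by
    have expand : (ρ ^ 2 - t2) ^ 2 = (ρ - t) ^ 2 * (ρ + t) ^ 2 := by
      rw [← htsq]; ring
    rw [expand]
    have hle : ρ ^ 2 ≤ (ρ + t) ^ 2 := by nlinarith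
    exact mul_le_mul_of_nonneg_left hle (sq_nonneg _)
  have hub : (ρ ^ 2 - t2) ^ 2 ≤ (7 * (ρ * τ)) ^ 2 :=
    sq_le_sq' (by linarith) (by linarith)
  have hρt : (ρ - t) ^ 2 ≤ 49 * τ ^ 2 := by
    have hh : (ρ - t) ^ 2 * ρ ^ 2 ≤ (49 * τ ^ 2) * ρ ^ 2 := by nlinarith
    exact le_of_mul_le_mul_right hh hρ2pos
  have hcomb : 2 * ((ρ - t) ^ 2 / t2) + 2 * (E / t2) = (2 * (ρ - t) ^ 2 + 2 * E) / t2 := by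
    ring
  rw [hcomb, div_lt_iff₀ ht2pos]
  have hκτ : ρ ^ 2 * κ ^ 2 = 1000000 * τ ^ 2 := by rw [hτ]; ring
  have hτ2pos : 0 < τ ^ 2 := by positivity
  have hmul : κ ^ 2 * (ρ ^ 2 / 2) ≤ κ ^ 2 * t2 :=
    mul_le_mul_of_nonneg_left ht2lo (sq_nonneg κ)
  have hR1 : κ ^ 2 * (ρ ^ 2 / 2) = 500000 * τ ^ 2 := by linear_combination hκτ / 2
  have hL : 2 * (ρ - t) ^ 2 + 2 * E ≤ 114 * τ ^ 2 := by nlinarith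
  linarith

lemma dotp_sub_right (u v w : ℝ × ℝ) : dotp u (v - w) = dotp u v - dotp u w := by
  simp only [dotp, Prod.fst_sub, Prod.snd_sub]; ring

lemma dotp_smul_right (c : ℝ) (u v : ℝ × ℝ) : dotp u (c • v) = c * dotp u v := by
  simp only [dotp, Prod.smul_fst, Prod.smul_snd, smul_eq_mul]; ring

lemma chi_halfE_off {a w x : ℝ × ℝ} (e₁ e₂ : Bool)
    (hx1 : x ≠ a + perp w) (hx2 : x ≠ a - perp w) :
    chi (halfE a w e₁ e₂) x = chi (halfE a w false false) x := by
  apply chi_eq_of_iff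
  unfold halfE
  rw [Set.mem_setOf_eq, Set.mem_setOf_eq]
  constructor
  · rintro (h | ⟨h1, h2 | ⟨-, h⟩ | ⟨-, h⟩⟩)
    · exact Or.inl h
    · exact Or.inr ⟨h1, Or.inl h2⟩
    · exact absurd h hx1
    · exact absurd h hx2
  · rintro (h | ⟨h1, h2 | ⟨h, -⟩ | ⟨h, -⟩⟩)
    · exact Or.inl h
    · exact Or.inr ⟨h1, Or.inl h2⟩
    · exact absurd h (by simp)
    · exact absurd h (by simp)

lemma forcing {F : Set ((ℝ × ℝ) → Bool)} (hFc : IsClosed F) {S : Set (ℝ × ℝ)}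
    (hy : ∀ b ∈ S, chi (halfE b (1, 0) false false) ∈ F)
    {a w : ℝ × ℝ} (hw : nsq w = 1) (hdir : DirAt S a w) :
    ∃ e₁ e₂ : Bool, chi (halfE a w e₁ e₂) ∈ F := by
  -- choose an approximating sequence
  have hseq : ∀ n : ℕ, ∃ b, b ∈ S ∧ b ≠ a ∧ nsq (b - a) < (1 / (n + 1) : ℝ) ^ 2 ∧
      nsq ((Real.sqrt (nsq (b - a)))⁻¹ • (b - a) - w) < (1 / (n + 1) : ℝ) ^ 2 := by
    intro n
    obtain ⟨b, hbS, h1, h2, h3⟩ := hdir (1 / (n + 1)) (by positivity)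
    exact ⟨b, hbS, h1, h2, h3⟩
  choose b hbS hbne hbn hbd using hseq
  set g : ℕ → ((ℝ × ℝ) → Bool) := fun n => chi (halfE (b n) (1, 0) false false) with hg
  have hgF : ∀ n, g n ∈ F := fun n => hy (b n) (hbS n)
  have hFcpt : IsCompact F := hFc.isCompact
  haveI : (Filter.map g Filter.atTop).NeBot := Filter.map_neBot
  obtain ⟨gl, hglF, hcl⟩ := hFcpt.exists_clusterPt (f := Filter.map g Filter.atTop)
    (Filter.le_principal_iff.mpr (Filter.mem_map.mpr (Filter.Eventually.of_forall hgF)))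
  -- cluster point coordinate extraction
  have hcoord : ∀ (x : ℝ × ℝ) (t : Bool),
      (∀ᶠ n in Filter.atTop, g n x = t) → gl x = t := by
    intro x t hev
    obtain ⟨N, hN⟩ := Filter.eventually_atTop.mp hev
    have hU : {h : (ℝ × ℝ) → Bool | h x = gl x} ∈ nhds gl := by
      have hset : {h : (ℝ × ℝ) → Bool | h x = gl x} =
          (fun h : (ℝ × ℝ) → Bool => h x) ⁻¹' ({gl x} : Set Bool) := by
        ext h; simp
      have hop : IsOpen {h : (ℝ × ℝ) → Bool | h x = gl x} := by
        rw [hset]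
        exact (continuous_apply x).isOpen_preimage _ (isOpen_discrete _)
      exact hop.mem_nhds rfl
    have hV : g '' {n | N ≤ n} ∈ Filter.map g Filter.atTop :=
      Filter.image_mem_map (Filter.mem_atTop N)
    obtain ⟨y, hy1, hy2⟩ := clusterPt_iff_nonempty.mp hcl hU hV
    obtain ⟨m, hm, rfl⟩ := hy2
    rw [← hy1, hN m hm]
  -- eventual coordinate values
  have hsmall : ∀ ε : ℝ, 0 < ε → ∀ᶠ n : ℕ in Filter.atTop, (1 / (n + 1) : ℝ) < ε := by
    intro ε hε
    exact tendsto_one_div_add_atTop_nhds_zero_nat.eventually (gt_mem_nhds hε)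
  have hev : ∀ x : ℝ × ℝ, x ≠ a + perp w → x ≠ a - perp w →
      (∀ᶠ n in Filter.atTop, g n x = chi (halfE a w false false) x) := by
    intro x hx1 hx2
    have key : ∀ n : ℕ, ∀ ε : ℝ, 0 < ε → (1 / (n + 1) : ℝ) < ε →
        nsq (x - b n) = nsq (x - a) - 2 * dotp (x - a) (b n - a) + nsq (b n - a) := by
      intro n ε hε h
      have : x - b n = (x - a) - (b n - a) := by abel
      rw [this, nsq_expand]
    rcases lt_trichotomy (nsq (x - a)) 1 with hr | hr | hr
    · -- interior point
      have hval : chi (halfE a w false false) x = true :=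
        chi_eq_true.mpr (mem_halfE_ff.mpr (Or.inl hr))
      rw [hval]
      filter_upwards [hsmall ((1 - nsq (x - a)) / 4) (by linarith), hsmall 1 one_pos] with n hn hn1
      apply chi_eq_true.mpr
      apply mem_halfE_ff.mpr
      left
      have hexp : x - b n = (x - a) - (b n - a) := by abel
      rw [hexp, nsq_expand]
      set τ : ℝ := (1 / (n + 1) : ℝ) with hτ
      have hτ0 : 0 < τ := by positivity
      have hρ : nsq (b n - a) < τ ^ 2 := hbn n
      have hd2 : dotp (x - a) (b n - a) ^ 2 ≤ nsq (x - a) * nsq (b n - a) := dotp_sq_le _ _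
      have hr0 : 0 ≤ nsq (x - a) := nsq_nonneg _
      have hρ0 : 0 ≤ nsq (b n - a) := nsq_nonneg _
      have hdle : dotp (x - a) (b n - a) ^ 2 ≤ τ ^ 2 :=
        le_trans hd2 (by nlinarith)
      obtain ⟨hd1', hd2'⟩ := abs_le_of_sq_le_sq' hdle hτ0.le
      nlinarith [sq_nonneg τ]
    · -- boundary point
      have hs : dotp (x - a) w ≠ 0 := by
        intro h0
        have hxu : nsq (x - a) = 1 := hr
        rcases unit_orth hxu hw h0 with h | h
        · apply hx1
          have h' := sub_eq_iff_eq_add.mp h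
          rw [h']; abel
        · apply hx2
          have h' := sub_eq_iff_eq_add.mp h
          rw [h']; abel
      rcases lt_or_gt_of_ne hs with hneg | hpos
      · -- s < 0 : outside eventually
        have hval : chi (halfE a w false false) x = false := by
          apply chi_eq_false.mpr
          intro hmem
          rcases mem_halfE_ff.mp hmem with h | ⟨-, h⟩
          · linarith
          · linarith
        rw [hval]
        filter_upwards [hsmall (-dotp (x - a) w / 2) (by linarith)] with n hn
        apply chi_eq_false.mpr
        intro hmem
        set τ : ℝ := (1 / (n + 1) : ℝ) with hτ
        have hτ0 : 0 < τ := by positivity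
        have hρ : nsq (b n - a) < τ ^ 2 := hbn n
        have hρ0 : 0 < nsq (b n - a) := by
          rcases lt_or_eq_of_le (nsq_nonneg (b n - a)) with h | h
          · exact h
          · exact absurd (nsq_eq_zero.mp h.symm) (sub_ne_zero.mpr (hbne n))
        set t : ℝ := Real.sqrt (nsq (b n - a)) with ht
        have ht0 : 0 < t := Real.sqrt_pos.mpr hρ0
        have htsq : t ^ 2 = nsq (b n - a) := Real.sq_sqrt hρ0.le
        set u : ℝ × ℝ := t⁻¹ • (b n - a) with hu
        have hbu : b n - a = t • u := by
          rw [hu, smul_smul, mul_inv_cancel₀ (ne_of_gt ht0), one_smul]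
        have hud : nsq (u - w) < τ ^ 2 := hbd n
        have hdu : dotp (x - a) u < dotp (x - a) w + τ := by
          have hsub : dotp (x - a) u - dotp (x - a) w = dotp (x - a) (u - w) := by
            rw [dotp_sub_right]
          have hsq : dotp (x - a) (u - w) ^ 2 ≤ nsq (x - a) * nsq (u - w) := dotp_sq_le _ _
          have : dotp (x - a) (u - w) ^ 2 < τ ^ 2 := by rw [hr] at hsq; nlinarith
          nlinarith [sq_nonneg (dotp (x - a) (u - w) - τ)]
        have ht_lt : t < τ := by
          rw [ht]
          have := Real.sqrt_lt_sqrt (nsq_nonneg _) hρ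
          rwa [Real.sqrt_sq hτ0.le] at this
        rcases mem_halfE_ff.mp hmem with h | ⟨h, -⟩
        · -- nsq (x - b n) < 1 impossible
          have hexp : x - b n = (x - a) - (b n - a) := by abel
          rw [hexp, nsq_expand, hr, hbu, dotp_smul_right, nsq_smul] at h
          have hnsqu : nsq u = 1 := by
            rw [hu, nsq_smul, ← htsq]
            field_simp
          rw [hnsqu] at h
          nlinarith [mul_pos ht0 (by linarith : (0:ℝ) < -(2 * dotp (x - a) u) + t)]
        · -- nsq (x - b n) = 1 with direction (1,0): but then also nsq = 1 contradiction
          have hexp : x - b n = (x - a) - (b n - a) := by abel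
          rw [hexp, nsq_expand, hr, hbu, dotp_smul_right, nsq_smul] at h
          have hnsqu : nsq u = 1 := by
            rw [hu, nsq_smul, ← htsq]
            field_simp
          rw [hnsqu] at h
          nlinarith [mul_pos ht0 (by linarith : (0:ℝ) < -(2 * dotp (x - a) u) + t)]
      · -- s > 0 : inside eventually
        have hval : chi (halfE a w false false) x = true :=
          chi_eq_true.mpr (mem_halfE_ff.mpr (Or.inr ⟨hr, hpos⟩))
        rw [hval]
        filter_upwards [hsmall (dotp (x - a) w / 2) (by linarith)] with n hn
        apply chi_eq_true.mpr
        apply mem_halfE_ff.mpr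
        left
        set τ : ℝ := (1 / (n + 1) : ℝ) with hτ
        have hτ0 : 0 < τ := by positivity
        have hρ : nsq (b n - a) < τ ^ 2 := hbn n
        have hρ0 : 0 < nsq (b n - a) := by
          rcases lt_or_eq_of_le (nsq_nonneg (b n - a)) with h | h
          · exact h
          · exact absurd (nsq_eq_zero.mp h.symm) (sub_ne_zero.mpr (hbne n))
        set t : ℝ := Real.sqrt (nsq (b n - a)) with ht
        have ht0 : 0 < t := Real.sqrt_pos.mpr hρ0
        have htsq : t ^ 2 = nsq (b n - a) := Real.sq_sqrt hρ0.le
        set u : ℝ × ℝ := t⁻¹ • (b n - a) with hu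
        have hbu : b n - a = t • u := by
          rw [hu, smul_smul, mul_inv_cancel₀ (ne_of_gt ht0), one_smul]
        have hud : nsq (u - w) < τ ^ 2 := hbd n
        have hdu : dotp (x - a) w - τ < dotp (x - a) u := by
          have hsq : dotp (x - a) (u - w) ^ 2 ≤ nsq (x - a) * nsq (u - w) := dotp_sq_le _ _
          have : dotp (x - a) (u - w) ^ 2 < τ ^ 2 := by rw [hr] at hsq; nlinarith
          have hsub : dotp (x - a) u - dotp (x - a) w = dotp (x - a) (u - w) := by
            rw [dotp_sub_right]
          nlinarith [sq_nonneg (dotp (x - a) (u - w) + τ)]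
        have ht_lt : t < τ := by
          rw [ht]
          have := Real.sqrt_lt_sqrt (nsq_nonneg _) hρ
          rwa [Real.sqrt_sq hτ0.le] at this
        have hexp : x - b n = (x - a) - (b n - a) := by abel
        rw [hexp, nsq_expand, hr, hbu, dotp_smul_right, nsq_smul]
        have hnsqu : nsq u = 1 := by
          rw [hu, nsq_smul, ← htsq]
          field_simp
        rw [hnsqu]
        nlinarith [mul_pos ht0 (by linarith : (0:ℝ) < 2 * dotp (x - a) u - t)]
    · -- exterior point
      have hval : chi (halfE a w false false) x = false := by
        apply chi_eq_false.mpr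
        intro hmem
        rcases mem_halfE_ff.mp hmem with h | ⟨h, -⟩
        · linarith
        · linarith
      rw [hval]
      filter_upwards [hsmall ((nsq (x - a) - 1) / (2 * nsq (x - a)))
        (div_pos (by linarith) (by linarith))] with n hn
      apply chi_eq_false.mpr
      intro hmem
      set τ : ℝ := (1 / (n + 1) : ℝ) with hτ
      have hτ0 : 0 < τ := by positivity
      have hρ : nsq (b n - a) < τ ^ 2 := hbn n
      have hρ0 : 0 ≤ nsq (b n - a) := nsq_nonneg _
      have hd2 : dotp (x - a) (b n - a) ^ 2 ≤ nsq (x - a) * nsq (b n - a) := dotp_sq_le _ _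
      have hrpos : (0:ℝ) < nsq (x - a) := by linarith
      have habs : |dotp (x - a) (b n - a)| ≤ nsq (x - a) * τ := by
        apply abs_le.mpr
        apply abs_le_of_sq_le_sq' _ (by positivity)
        calc dotp (x - a) (b n - a) ^ 2 ≤ nsq (x - a) * nsq (b n - a) := hd2
          _ ≤ (nsq (x - a) * τ) ^ 2 := by
            have h1 : nsq (x - a) * nsq (b n - a) ≤ nsq (x - a) * τ ^ 2 :=
              mul_le_mul_of_nonneg_left hρ.le hrpos.le
            have h2 : nsq (x - a) * τ ^ 2 ≤ nsq (x - a) * nsq (x - a) * τ ^ 2 := by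
              nlinarith [sq_nonneg τ]
            calc nsq (x - a) * nsq (b n - a) ≤ nsq (x - a) * τ ^ 2 := h1
              _ ≤ nsq (x - a) * nsq (x - a) * τ ^ 2 := h2
              _ = (nsq (x - a) * τ) ^ 2 := by ring
      have hexp : x - b n = (x - a) - (b n - a) := by abel
      have h2rτ : 2 * nsq (x - a) * τ < nsq (x - a) - 1 := by
        rw [lt_div_iff₀ (by linarith : (0:ℝ) < 2 * nsq (x - a))] at hn
        linarith
      rcases mem_halfE_ff.mp hmem with h | ⟨h, -⟩ <;>
      · rw [hexp, nsq_expand] at h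
        have habs' := abs_le.mp habs
        nlinarith [habs'.1, habs'.2]
  -- conclude
  refine ⟨gl (a + perp w), gl (a - perp w), ?_⟩
  have : chi (halfE a w (gl (a + perp w)) (gl (a - perp w))) = gl := by
    funext x
    by_cases hx1 : x = a + perp w
    · rw [hx1, chi_halfE_pos_endpoint hw]
    · by_cases hx2 : x = a - perp w
      · rw [hx2, chi_halfE_neg_endpoint hw]
      · rw [chi_halfE_off _ _ hx1 hx2, hcoord x _ (hev x hx1 hx2)]
  rw [this]
  exact hglF

lemma uncountable_nonempty {α : Type*} {S : Set α} (h : ¬S.Countable) : S.Nonempty := by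
  rcases Set.eq_empty_or_nonempty S with rfl | hne
  · exact absurd Set.countable_empty h
  · exact hne

lemma bad_dirs_countable {K : Type*} [TopologicalSpace K]
    (V : Set K) (hV : IsCompact V) [MetrizableSpace ↥V]
    (val2 : K → ((ℝ × ℝ) → Bool)) (hval2 : Continuous val2) (a : ℝ × ℝ) :
    {w : ℝ × ℝ | nsq w = 1 ∧ ∃ e₁ e₂ : Bool, ∃ y ∈ V,
      val2 y = chi (halfE a w e₁ e₂)}.Countable := by
  classical
  set W := {w : ℝ × ℝ | nsq w = 1 ∧ ∃ e₁ e₂ : Bool, ∃ y ∈ V,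
      val2 y = chi (halfE a w e₁ e₂)} with hW
  by_contra hunc
  haveI : CompactSpace ↥V := isCompact_iff_compactSpace.mp hV
  letI : MetricSpace ↥V := TopologicalSpace.metrizableSpaceMetric ↥V
  haveI hVne : Nonempty ↥V := by
    obtain ⟨w₀, hw₀⟩ := uncountable_nonempty hunc
    obtain ⟨-, -, -, y, hy, -⟩ := hw₀
    exact ⟨⟨y, hy⟩⟩
  -- total choice functions
  have hch : ∀ w : ℝ × ℝ, ∃ (e₁ e₂ : Bool) (y : ↥V),
      (w ∈ W → val2 y.1 = chi (halfE a w e₁ e₂)) := by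
    intro w
    by_cases h : w ∈ W
    · obtain ⟨-, e₁, e₂, y, hy, hval⟩ := h
      exact ⟨e₁, e₂, ⟨y, hy⟩, fun _ => hval⟩
    · exact ⟨true, true, Classical.arbitrary _, fun h' => absurd h' h⟩
  choose E₁ E₂ φ hφ using hch
  -- distinguishing open sets with uniform radius
  have hfun : ∀ w : ℝ × ℝ, ∃ n : ℕ, w ∈ W →
      Metric.ball (φ w) (1 / (n + 1)) ⊆
      {y : ↥V | val2 y.1 (a + perp w) = E₁ w ∧ val2 y.1 (a - perp w) = E₂ w} := by
    intro w
    by_cases h : w ∈ W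
    · have hwunit : nsq w = 1 := h.1
      have hop : IsOpen {y : ↥V | val2 y.1 (a + perp w) = E₁ w ∧
          val2 y.1 (a - perp w) = E₂ w} := by
        have h1 : IsOpen {y : ↥V | val2 y.1 (a + perp w) = E₁ w} := by
          have hset : {y : ↥V | val2 y.1 (a + perp w) = E₁ w} =
              (fun y : ↥V => val2 y.1 (a + perp w)) ⁻¹' ({E₁ w} : Set Bool) := by
            ext y; simp
          rw [hset]
          exact (((continuous_apply _).comp hval2).comp continuous_subtype_val).isOpen_preimage
            _ (isOpen_discrete _)
        have h2 : IsOpen {y : ↥V | val2 y.1 (a - perp w) = E₂ w} := by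
          have hset : {y : ↥V | val2 y.1 (a - perp w) = E₂ w} =
              (fun y : ↥V => val2 y.1 (a - perp w)) ⁻¹' ({E₂ w} : Set Bool) := by
            ext y; simp
          rw [hset]
          exact (((continuous_apply _).comp hval2).comp continuous_subtype_val).isOpen_preimage
            _ (isOpen_discrete _)
        exact h1.inter h2
      have hmem : φ w ∈ {y : ↥V | val2 y.1 (a + perp w) = E₁ w ∧
          val2 y.1 (a - perp w) = E₂ w} := by
        constructor
        · rw [hφ w h]; exact chi_halfE_pos_endpoint hwunit _ _
        · rw [hφ w h]; exact chi_halfE_neg_endpoint hwunit _ _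
      obtain ⟨ε, hε, hball⟩ := Metric.isOpen_iff.mp hop (φ w) hmem
      obtain ⟨n, hn⟩ := exists_nat_one_div_lt hε
      exact ⟨n, fun _ => subset_trans (Metric.ball_subset_ball (by push_cast; linarith)) hball⟩
    · exact ⟨0, fun h' => absurd h' h⟩
  choose nn hnn using hfun
  -- pigeonhole on (n, pattern)
  set C : ℕ → Bool → Bool → Set (ℝ × ℝ) := fun n b1 b2 =>
    {w ∈ W | nn w = n ∧ E₁ w = b1 ∧ E₂ w = b2} with hC
  have hWsub : W ⊆ ⋃ (n : ℕ) (b1 : Bool) (b2 : Bool), C n b1 b2 := by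
    intro w hw
    exact Set.mem_iUnion.mpr ⟨nn w, Set.mem_iUnion.mpr ⟨E₁ w, Set.mem_iUnion.mpr
      ⟨E₂ w, hw, rfl, rfl, rfl⟩⟩⟩
  have hCex : ∃ n b1 b2, ¬(C n b1 b2).Countable := by
    by_contra hall
    push_neg at hall
    exact hunc (Set.Countable.mono hWsub
      (Set.countable_iUnion fun n => Set.countable_iUnion fun b1 =>
        Set.countable_iUnion fun b2 => hall n b1 b2))
  obtain ⟨n, b1, b2, hCunc⟩ := hCex
  -- finite cover of V by balls of radius 1/(2(n+1))
  set δ : ℝ := 1 / (2 * (n + 1)) with hδ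
  have hδ0 : 0 < δ := by rw [hδ]; positivity
  have hcv : (Set.univ : Set ↥V) ⊆ ⋃ y : ↥V, Metric.ball y δ := by
    intro y _
    exact Set.mem_iUnion.mpr ⟨y, Metric.mem_ball_self hδ0⟩
  obtain ⟨t, ht⟩ := isCompact_univ.elim_finite_subcover (fun y : ↥V => Metric.ball y δ)
    (fun y => Metric.isOpen_ball) hcv
  -- pigeonhole on the finite cover
  have hC2ex : ∃ c ∈ t, ¬{w ∈ C n b1 b2 | φ w ∈ Metric.ball c δ}.Countable := by
    by_contra hall
    push_neg at hall
    apply hCunc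
    have hsub : C n b1 b2 ⊆ ⋃ c ∈ t, {w ∈ C n b1 b2 | φ w ∈ Metric.ball c δ} := by
      intro w hw
      have := ht (Set.mem_univ (φ w))
      obtain ⟨c, hc, hball⟩ := Set.mem_iUnion₂.mp this
      exact Set.mem_iUnion₂.mpr ⟨c, hc, hw, hball⟩
    exact Set.Countable.mono hsub (Set.Countable.biUnion t.countable_toSet
      (fun c hc => hall c hc))
  obtain ⟨c, -, hC2unc⟩ := hC2ex
  set C2 := {w ∈ C n b1 b2 | φ w ∈ Metric.ball c δ} with hC2
  -- pick two distinct non-antipodal elements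
  obtain ⟨w, hwC2⟩ := uncountable_nonempty hC2unc
  have hC2'unc : ¬(C2 \ {w, -w}).Countable := by
    intro h
    exact hC2unc (by
      have : C2 ⊆ (C2 \ {w, -w}) ∪ {w, -w} := by
        intro u hu
        by_cases h' : u ∈ ({w, -w} : Set (ℝ × ℝ))
        · exact Or.inr h'
        · exact Or.inl ⟨hu, h'⟩
      exact Set.Countable.mono this (h.union ((Set.countable_singleton _).insert _)))
  obtain ⟨u, huC2, hune⟩ := uncountable_nonempty hC2'unc
  have huw : u ≠ w := fun h => hune (Or.inl h)
  have hunw : u ≠ -w := fun h => hune (Or.inr h)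
  -- extract facts
  obtain ⟨⟨hwW, hwn, hwE1, hwE2⟩, hwball⟩ := hwC2
  obtain ⟨⟨huW, hun, huE1, huE2⟩, huball⟩ := huC2
  have hwu : nsq w = 1 := hwW.1
  have huu : nsq u = 1 := huW.1
  have hdist : dist (φ u) (φ w) < 1 / (n + 1) := by
    have h1 := Metric.mem_ball.mp hwball
    have h2 := Metric.mem_ball.mp huball
    calc dist (φ u) (φ w) ≤ dist (φ u) c + dist c (φ w) := dist_triangle _ _ _
      _ < δ + δ := by rw [dist_comm c (φ w)]; exact add_lt_add h2 h1
      _ = 2 * δ := by ring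
      _ = 1 / (n + 1) := by
          rw [hδ]
          have h : ((n : ℝ) + 1) ≠ 0 := by positivity
          field_simp
  have hdist' : dist (φ w) (φ u) < 1 / (n + 1) := by rw [dist_comm]; exact hdist
  -- apply the distinguishing ball of w to u
  have happ1 := hnn w hwW (by rw [hwn]; exact Metric.mem_ball.mpr hdist)
  -- and of u to w
  have happ2 := hnn u huW (by rw [hun]; exact Metric.mem_ball.mpr hdist')
  obtain ⟨hv1, hv2⟩ := happ1
  obtain ⟨hv3, hv4⟩ := happ2
  -- compute values
  have hd : dotp (perp w) u ≠ 0 := by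
    intro h0
    rcases unit_parallel huu hwu h0 with h | h
    · exact huw h
    · exact hunw h
  have heq1 : E₁ w = decide (0 < dotp (perp w) u) := by
    rw [← hv1, hφ u huW]
    exact chi_halfE_other_pos huu hwu huw hunw _ _
  have heq2 : E₂ w = decide (dotp (perp w) u < 0) := by
    rw [← hv2, hφ u huW]
    exact chi_halfE_other_neg huu hwu huw hunw _ _
  have hwnu : w ≠ u := fun h => huw h.symm
  have hwnnu : w ≠ -u := by
    intro h
    apply hunw
    rw [h]; simp
  have heq3 : E₁ u = decide (0 < dotp (perp u) w) := by
    rw [← hv3, hφ w hwW]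
    exact chi_halfE_other_pos hwu huu hwnu hwnnu _ _
  have heq4 : E₂ u = decide (dotp (perp u) w < 0) := by
    rw [← hv4, hφ w hwW]
    exact chi_halfE_other_neg hwu huu hwnu hwnnu _ _
  -- contradiction
  have hE1 : E₁ w = E₁ u := by rw [hwE1, huE1]
  have hE2 : E₂ w = E₂ u := by rw [hwE2, huE2]
  rw [heq1, heq3, dotp_perp_antisymm u w] at hE1
  rw [heq2, heq4, dotp_perp_antisymm u w] at hE2
  rcases lt_or_gt_of_ne hd with h | h
  · rw [decide_eq_decide] at hE1
    have h1 : ¬(0 < dotp (perp w) u) := by linarith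
    have h2 : 0 < -dotp (perp w) u := by linarith
    exact h1 (hE1.mpr h2)
  · rw [decide_eq_decide] at hE2
    have h1 : ¬(dotp (perp w) u < 0) := by linarith
    have h2 : -dotp (perp w) u < 0 := by linarith
    exact h1 (hE2.mpr h2)

lemma abs_fst_le_dist (u v : ℝ × ℝ) : |u.1 - v.1| ≤ dist u v := by
  rw [← Real.dist_eq, Prod.dist_eq]
  exact le_max_left _ _

lemma abs_snd_le_dist (u v : ℝ × ℝ) : |u.2 - v.2| ≤ dist u v := by
  rw [← Real.dist_eq, Prod.dist_eq]
  exact le_max_right _ _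


end

end KAAux

open KAAux

set_option maxHeartbeats 2000000 in
/-- The compact space `KA` is not an `LΣ(≤ω)`-space. -/
theorem KA_not_LSigmaLeOmega : ¬ IsLSigmaLeOmega ↥KA := by
  rintro ⟨M, tM, hsep, hmetr, p, hcov, hcpt, husc, hfib⟩
  classical
  letI := tM
  haveI := hsep
  haveI := hmetr
  letI : MetricSpace M := TopologicalSpace.metrizableSpaceMetric M
  haveI : SecondCountableTopology M := UniformSpace.secondCountable_of_separable M
  -- a point of KA, so M is nonempty
  have hKAne : chi (diskD ((0 : ℝ), (0 : ℝ))) ∈ KA := by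
    apply subset_closure
    exact ⟨((0 : ℚ), (0 : ℚ)), by norm_num⟩
  have hy₀ : (⟨_, hKAne⟩ : ↥KA) ∈ ⋃ z, p z := by rw [hcov]; trivial
  obtain ⟨z₀, hz₀⟩ := Set.mem_iUnion.mp hy₀
  haveI : Nonempty M := ⟨z₀⟩
  -- countable basis
  obtain ⟨bas, hbasc, -, hbas⟩ := TopologicalSpace.exists_countable_basis M
  have hbasne : bas.Nonempty := by
    obtain ⟨B, hB, -, -⟩ := hbas.exists_subset_of_mem_open (Set.mem_univ z₀) isOpen_univ
    exact ⟨B, hB⟩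
  obtain ⟨enum, henum⟩ := Set.Countable.exists_eq_range hbasc hbasne
  -- the candidate network
  set FB : ℕ → Set ((ℝ × ℝ) → Bool) :=
    fun n => closure (⋃ z ∈ enum n, Subtype.val '' p z) with hFBdef
  have hFBclosed : ∀ n, IsClosed (FB n) := fun n => isClosed_closure
  have hnet : ∀ z : M, ∀ U : Set ((ℝ × ℝ) → Bool), IsOpen U → Subtype.val '' p z ⊆ U →
      ∃ n, Subtype.val '' p z ⊆ FB n ∧ FB n ⊆ U := by
    intro z U hU hsub
    have hcompact : IsCompact (Subtype.val '' p z) := (hcpt z).image continuous_subtype_val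
    have hclosed : IsClosed (Subtype.val '' p z) := hcompact.isClosed
    obtain ⟨Vo, hVo, hsubV, hclV⟩ := normal_exists_closure_subset hclosed hU hsub
    have hopen2 : IsOpen {z' : M | p z' ⊆ Subtype.val ⁻¹' Vo} :=
      husc _ (hVo.preimage continuous_subtype_val)
    have hz : z ∈ {z' : M | p z' ⊆ Subtype.val ⁻¹' Vo} := by
      intro y hy
      exact hsubV ⟨y, hy, rfl⟩
    obtain ⟨B, hBmem, hzB, hBsub⟩ := hbas.exists_subset_of_mem_open hz hopen2
    rw [henum] at hBmem
    obtain ⟨n, rfl⟩ := hBmem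
    refine ⟨n, ?_, ?_⟩
    · exact subset_trans (by
        intro g hg
        exact Set.mem_iUnion₂.mpr ⟨z, hzB, hg⟩) subset_closure
    · have hsub2 : (⋃ z' ∈ enum n, Subtype.val '' p z') ⊆ Vo := by
        intro g hg
        obtain ⟨z', hz', y, hy, rfl⟩ := Set.mem_iUnion₂.mp hg
        exact hBsub hz' hy
      calc FB n ⊆ closure Vo := closure_mono hsub2
        _ ⊆ U := hclV
  -- the points and their fibers
  set yA : (ℝ × ℝ) → ↥KA := fun a => ⟨chi (halfE a (1, 0) false false), half_mem_KA a⟩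
    with hyAdef
  have hzz : ∀ a : ℝ × ℝ, ∃ z : M, yA a ∈ p z := by
    intro a
    have : yA a ∈ ⋃ z, p z := by rw [hcov]; trivial
    exact Set.mem_iUnion.mp this
  choose ζ hζ using hzz
  -- bad directions are countable
  have hQ : ∀ a : ℝ × ℝ, {w : ℝ × ℝ | nsq w = 1 ∧ ∃ e₁ e₂ : Bool, ∃ y ∈ p (ζ a),
      Subtype.val y = chi (halfE a w e₁ e₂)}.Countable := by
    intro a
    haveI := hfib (ζ a)
    exact bad_dirs_countable (p (ζ a)) (hcpt (ζ a)) Subtype.val continuous_subtype_val a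
  -- pick a good direction for each point
  have hwex : ∀ a : ℝ × ℝ, ∃ t : ℝ, cmap t ∉ {w : ℝ × ℝ | nsq w = 1 ∧
      ∃ e₁ e₂ : Bool, ∃ y ∈ p (ζ a), Subtype.val y = chi (halfE a w e₁ e₂)} := by
    intro a
    by_contra hall
    push_neg at hall
    have hpre : (cmap ⁻¹' {w : ℝ × ℝ | nsq w = 1 ∧ ∃ e₁ e₂ : Bool, ∃ y ∈ p (ζ a),
        Subtype.val y = chi (halfE a w e₁ e₂)}).Countable :=
      Set.Countable.preimage (hQ a) cmap_injective
    have : (Set.univ : Set ℝ).Countable := by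
      refine Set.Countable.mono ?_ hpre
      intro t _
      exact hall t
    exact Cardinal.not_countable_real this
  choose tdir htdir using hwex
  set wdir : (ℝ × ℝ) → ℝ × ℝ := fun a => cmap (tdir a) with hwdirdef
  have hwunit : ∀ a, nsq (wdir a) = 1 := fun a => nsq_cmap _
  -- exclusion sets
  have hExcl : ∀ a : ℝ × ℝ, IsClosed {g : (ℝ × ℝ) → Bool |
      ∃ e₁ e₂ : Bool, g = chi (halfE a (wdir a) e₁ e₂)} := by
    intro a
    have heq : {g : (ℝ × ℝ) → Bool | ∃ e₁ e₂ : Bool, g = chi (halfE a (wdir a) e₁ e₂)} =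
        ⋃ (e₁ : Bool), ⋃ (e₂ : Bool), {chi (halfE a (wdir a) e₁ e₂)} := by
      ext g
      simp [Set.mem_iUnion]
    rw [heq]
    exact isClosed_iUnion_of_finite fun e₁ => isClosed_iUnion_of_finite fun e₂ =>
      isClosed_singleton
  have hpEx : ∀ a : ℝ × ℝ, Subtype.val '' p (ζ a) ⊆
      {g : (ℝ × ℝ) → Bool | ∃ e₁ e₂ : Bool, g = chi (halfE a (wdir a) e₁ e₂)}ᶜ := by
    intro a
    rintro g ⟨y, hy, rfl⟩ ⟨e₁, e₂, hform⟩
    exact htdir a ⟨hwunit a, e₁, e₂, y, hy, hform⟩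
  have hna : ∀ a : ℝ × ℝ, ∃ n, Subtype.val '' p (ζ a) ⊆ FB n ∧
      FB n ⊆ {g : (ℝ × ℝ) → Bool | ∃ e₁ e₂ : Bool, g = chi (halfE a (wdir a) e₁ e₂)}ᶜ :=
    fun a => hnet (ζ a) _ (hExcl a).isOpen_compl (hpEx a)
  choose na hna1 hna2 using hna
  -- avoidance
  have havoid : ∀ a : ℝ × ℝ, ¬ DirAt {b : ℝ × ℝ | Subtype.val '' p (ζ b) ⊆ FB (na a)}
      a (wdir a) := by
    intro a hdir
    have hy : ∀ b ∈ {b : ℝ × ℝ | Subtype.val '' p (ζ b) ⊆ FB (na a)},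
        chi (halfE b (1, 0) false false) ∈ FB (na a) := by
      intro b hb
      exact hb ⟨yA b, hζ b, rfl⟩
    obtain ⟨e₁, e₂, hmem⟩ := forcing (hFBclosed (na a)) hy (hwunit a) hdir
    exact (hna2 a hmem) ⟨e₁, e₂, rfl⟩
  have havoid' : ∀ a : ℝ × ℝ, ∃ ε, 0 < ε ∧
      ∀ b, Subtype.val '' p (ζ b) ⊆ FB (na a) → b ≠ a → nsq (b - a) < ε ^ 2 →
      ε ^ 2 ≤ nsq ((Real.sqrt (nsq (b - a)))⁻¹ • (b - a) - wdir a) := by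
    intro a
    have h := havoid a
    unfold DirAt at h
    push_neg at h
    obtain ⟨ε, hε, h2⟩ := h
    refine ⟨ε, hε, ?_⟩
    intro b hb hne hlt
    have := h2 b hb hne hlt
    linarith [this]
  -- the pieces
  set SS : ℕ × ℕ × ℚ → Set (ℝ × ℝ) := fun i =>
    {a : ℝ × ℝ | Subtype.val '' p (ζ a) ⊆ FB i.1 ∧
      ∀ b, Subtype.val '' p (ζ b) ⊆ FB i.1 → b ≠ a →
        nsq (b - a) < (1 / ((i.2.1 : ℝ) + 1)) ^ 2 →
        (1 / ((i.2.1 : ℝ) + 1)) ^ 2 ≤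
          nsq ((Real.sqrt (nsq (b - a)))⁻¹ • (b - a) - cmap (i.2.2 : ℝ))} with hSSdef
  have hcover : ∀ a : ℝ × ℝ, ∃ i, a ∈ closure (SS i) := by
    intro a
    obtain ⟨ε, hε0, hav⟩ := havoid' a
    obtain ⟨k, hk⟩ := exists_nat_one_div_lt (half_pos hε0)
    obtain ⟨q, hq⟩ := cmap_rat_approx (tdir a) (show (0:ℝ) < ε ^ 2 / 8 by positivity)
    refine ⟨(na a, k, q), subset_closure ?_⟩
    refine ⟨hna1 a, ?_⟩
    intro b hb hne hlt
    have hκε : (1 / ((k : ℝ) + 1)) < ε / 2 := hk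
    have hκ0 : (0:ℝ) < 1 / ((k : ℝ) + 1) := by positivity
    have hprod : (1 / ((k : ℝ) + 1)) * (1 / ((k : ℝ) + 1)) < (ε / 2) * (ε / 2) :=
      mul_lt_mul'' hκε hκε hκ0.le hκ0.le
    have h1 : nsq (b - a) < ε ^ 2 := by
      apply lt_trans hlt
      nlinarith
    have h2 := hav b hb hne h1
    set u := (Real.sqrt (nsq (b - a)))⁻¹ • (b - a) with hu
    have htri : nsq (u - wdir a) ≤ 2 * nsq (u - cmap (q : ℝ)) +
        2 * nsq (cmap (q : ℝ) - wdir a) := by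
      have : u - wdir a = (u - cmap (q : ℝ)) + (cmap (q : ℝ) - wdir a) := by abel
      rw [this]
      exact nsq_add_le _ _
    have hqw : nsq (cmap (q : ℝ) - wdir a) < ε ^ 2 / 8 := hq
    have h3 : (3 : ℝ) / 8 * ε ^ 2 ≤ nsq (u - cmap (q : ℝ)) := by linarith
    have h4 : (1 / ((k : ℝ) + 1)) ^ 2 ≤ 3 / 8 * ε ^ 2 := by nlinarith [hprod]
    linarith
  -- Baire category
  have huniv : ⋃ i, closure (SS i) = Set.univ := by
    apply Set.eq_univ_of_forall
    intro a
    exact Set.mem_iUnion.mpr (hcover a)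
  obtain ⟨i, hi⟩ := nonempty_interior_of_iUnion_of_closed
    (fun i => isClosed_closure (s := SS i)) huniv
  obtain ⟨y0, hy0⟩ := hi
  obtain ⟨ρ₀, hρ₀, hball⟩ := Metric.isOpen_iff.mp isOpen_interior y0 hy0
  -- setup parameters
  set κ : ℝ := 1 / ((i.2.1 : ℝ) + 1) with hκdef
  have hκ0 : 0 < κ := by rw [hκdef]; positivity
  have hκ1 : κ ≤ 1 := by
    rw [hκdef]
    rw [div_le_one (by positivity)]
    linarith [Nat.cast_nonneg (α := ℝ) i.2.1]
  set c : ℝ × ℝ := cmap ((i.2.2 : ℚ) : ℝ) with hcdef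
  have hc1 : nsq c = 1 := nsq_cmap _
  have hc1' : c.1 ^ 2 + c.2 ^ 2 = 1 := hc1
  have hcabs1 : |c.1| ≤ 1 := by
    rw [abs_le]
    constructor <;> nlinarith [sq_nonneg c.1, sq_nonneg c.2]
  have hcabs2 : |c.2| ≤ 1 := by
    rw [abs_le]
    constructor <;> nlinarith [sq_nonneg c.1, sq_nonneg c.2]
  set ρ : ℝ := min (ρ₀ / 2) (κ / 1000) with hρdef
  have hρpos : 0 < ρ := lt_min (by linarith) (by positivity)
  have hρκ : ρ ≤ κ / 1000 := min_le_right _ _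
  have hρρ₀ : ρ ≤ ρ₀ / 2 := min_le_left _ _
  set τ : ℝ := ρ * κ / 1000 with hτdef
  have hτ0 : 0 < τ := by rw [hτdef]; positivity
  set y1 : ℝ × ℝ := y0 + ρ • c with hy1def
  -- both points lie in the closure of SS
  have hy0cl : y0 ∈ closure (SS i) :=
    interior_subset (hball (Metric.mem_ball_self hρ₀))
  have hy1cl : y1 ∈ closure (SS i) := by
    apply interior_subset
    apply hball
    rw [Metric.mem_ball]
    have h1 : dist y1 y0 ≤ ρ := by
      rw [Prod.dist_eq]
      have e1 : y1.1 - y0.1 = ρ * c.1 := by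
        rw [hy1def]; simp [Prod.fst_add, Prod.smul_fst]
      have e2 : y1.2 - y0.2 = ρ * c.2 := by
        rw [hy1def]; simp [Prod.snd_add, Prod.smul_snd]
      have d1 : dist y1.1 y0.1 ≤ ρ := by
        rw [Real.dist_eq, e1, abs_mul, abs_of_pos hρpos]
        nlinarith [abs_nonneg c.1]
      have d2 : dist y1.2 y0.2 ≤ ρ := by
        rw [Real.dist_eq, e2, abs_mul, abs_of_pos hρpos]
        nlinarith [abs_nonneg c.2]
      exact max_le d1 d2
    linarith
  -- pick approximating points in SS
  obtain ⟨b, hbSS, hbd⟩ := Metric.mem_closure_iff.mp hy0cl τ hτ0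
  obtain ⟨b', hb'SS, hb'd⟩ := Metric.mem_closure_iff.mp hy1cl τ hτ0
  -- the difference vector
  set e : ℝ × ℝ := (b' - b) - ρ • c with hedef
  have he1 : |e.1| ≤ 2 * τ := by
    have hsplit : e.1 = (b'.1 - y1.1) + (y0.1 - b.1) := by
      rw [hedef, hy1def]
      simp only [Prod.fst_sub, Prod.fst_add, Prod.smul_fst, smul_eq_mul]
      ring
    rw [hsplit]
    calc |(b'.1 - y1.1) + (y0.1 - b.1)| ≤ |b'.1 - y1.1| + |y0.1 - b.1| := abs_add_le _ _
      _ ≤ dist b' y1 + dist y0 b := by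
          gcongr
          · exact abs_fst_le_dist b' y1
          · exact abs_fst_le_dist y0 b
      _ ≤ 2 * τ := by
          rw [dist_comm b' y1]
          linarith [hb'd, hbd]
  have he2 : |e.2| ≤ 2 * τ := by
    have hsplit : e.2 = (b'.2 - y1.2) + (y0.2 - b.2) := by
      rw [hedef, hy1def]
      simp only [Prod.snd_sub, Prod.snd_add, Prod.smul_snd, smul_eq_mul]
      ring
    rw [hsplit]
    calc |(b'.2 - y1.2) + (y0.2 - b.2)| ≤ |b'.2 - y1.2| + |y0.2 - b.2| := abs_add_le _ _
      _ ≤ dist b' y1 + dist y0 b := by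
          gcongr
          · exact abs_snd_le_dist b' y1
          · exact abs_snd_le_dist y0 b
      _ ≤ 2 * τ := by
          rw [dist_comm b' y1]
          linarith [hb'd, hbd]
  have hE8 : nsq e ≤ 8 * τ ^ 2 := by
    have h1 : e.1 ^ 2 ≤ (2 * τ) ^ 2 := by
      rw [← sq_abs]
      exact pow_le_pow_left₀ (abs_nonneg _) he1 2
    have h2 : e.2 ^ 2 ≤ (2 * τ) ^ 2 := by
      rw [← sq_abs]
      exact pow_le_pow_left₀ (abs_nonneg _) he2 2
    simp only [nsq]
    nlinarith
  have hd3 : |dotp c e| ≤ 3 * τ := by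
    have h1 : dotp c e ^ 2 ≤ nsq c * nsq e := dotp_sq_le _ _
    rw [hc1, one_mul] at h1
    apply abs_le.mpr
    apply abs_le_of_sq_le_sq' _ (by positivity)
    nlinarith
  have hbb' : b' - b = ρ • c + e := by rw [hedef]; abel
  have ht2 : nsq (b' - b) = ρ ^ 2 + 2 * ρ * dotp c e + nsq e := by
    rw [hbb', nsq_expand_add, nsq_smul, dotp_smul_left, hc1]
    ring
  obtain ⟨ht2pos, ht2small, harith⟩ := final_arith hκ0 hκ1 hρpos hρκ rfl
    (nsq_nonneg e) hE8 hd3 ht2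
  -- b' ≠ b
  have hbne : b' ≠ b := by
    intro h
    rw [h, sub_self] at ht2pos
    rw [nsq_eq_zero.mpr rfl] at ht2pos
    exact lt_irrefl 0 ht2pos
  -- apply the avoidance property of b to b'
  obtain ⟨hbFB, hbav⟩ := hbSS
  obtain ⟨hb'FB, -⟩ := hb'SS
  have hge := hbav b' hb'FB hbne (by rw [hκdef] at ht2small; exact ht2small)
  -- contradiction: nsq (u' - c) < κ^2
  set t : ℝ := Real.sqrt (nsq (b' - b)) with htdef
  have hsplit : (t⁻¹ • (b' - b)) - c = (t⁻¹ * ρ - 1) • c + t⁻¹ • e := by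
    rw [hbb', smul_add, smul_smul, sub_smul, one_smul]
    abel
  have hlt : nsq ((t⁻¹ • (b' - b)) - c) < κ ^ 2 := by
    rw [hsplit]
    calc nsq ((t⁻¹ * ρ - 1) • c + t⁻¹ • e)
        ≤ 2 * nsq ((t⁻¹ * ρ - 1) • c) + 2 * nsq (t⁻¹ • e) := nsq_add_le _ _
      _ = 2 * ((t⁻¹ * ρ - 1) ^ 2) + 2 * (t⁻¹) ^ 2 * nsq e := by
          rw [nsq_smul, nsq_smul, hc1]
          ring
      _ < κ ^ 2 := harith
  rw [← hκdef] at hge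
  rw [← hcdef] at hge
  exact absurd hge (not_le.mpr hlt)
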